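/- Let m, d and a_0, a_1,…,a_d, b_0, b_1,…,b_d be positive integers with b_i ≥ a_i for all 0 ≤ i ≤ d. If every cake-division instance with a_0 agents and d cakes, cake t cut into a_t slices, has a placatable set of size m, then every cake-division instance with b_0 agents and d cakes, cake t cut into b_t slices, has a placatable set of size m. -/

import Mathlib

/-- The space of partitions of `d` cakes, cake `t` being cut into `a t` slices:
each coordinate lies in the standard simplex. -/
def PartitionSpace (d : ℕ) (a : Fin d → ℕ) : Set (∀ t, Fin (a t) → ℝ) :=
  {P | ∀ t, P t ∈ stdSimplex ℝ (Fin (a t))}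

/-- A cake-division instance with `n` agents and `d` cakes, cake `t` cut into
`a t` slices: for each agent `i` and index vector `j`, a set `A i j ⊆ 𝒫` of
partitions in which agent `i` accepts the `d`-tuple of slices indexed by `j`.
The sets are closed and the hungry-agents condition holds. -/
structure CakeInstance (n d : ℕ) (a : Fin d → ℕ) where
  A : Fin n → (∀ t, Fin (a t)) → Set (∀ t, Fin (a t) → ℝ)
  subset_partitionSpace : ∀ i j, A i j ⊆ PartitionSpace d a
  isClosed : ∀ i j, IsClosed (A i j)
  hungry : ∀ i, ∀ P ∈ PartitionSpace d a, ∃ j : ∀ t, Fin (a t),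
    P ∈ A i j ∧ ∀ t, 0 < P t (j t)

/-- A set `Q` of agents is placatable: there exist a partition `P` and index
vectors, one acceptable at `P` for each agent of `Q`, such that the index
vectors of distinct agents of `Q` differ in every coordinate. -/
def Placatable {n d : ℕ} {a : Fin d → ℕ} (C : CakeInstance n d a)
    (Q : Finset (Fin n)) : Prop :=
  ∃ P ∈ PartitionSpace d a, ∃ φ : Fin n → ∀ t, Fin (a t),
    (∀ q ∈ Q, P ∈ C.A q (φ q)) ∧
    ∀ q ∈ Q, ∀ q' ∈ Q, q ≠ q' → ∀ t, φ q t ≠ φ q' t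

/-- Monotonicity of admissible division: if every cake-division instance with
`a₀` agents and cake sizes `a` has a placatable set of size `m`, then so does
every instance with `b₀ ≥ a₀` agents and cake sizes `b ≥ a` (coordinatewise). -/
theorem ad_monotone (m d : ℕ) (hm : 0 < m) (hd : 0 < d)
    (a₀ b₀ : ℕ) (a b : Fin d → ℕ)
    (ha₀ : 0 < a₀) (ha : ∀ i, 0 < a i) (hb₀ : 0 < b₀) (hb : ∀ i, 0 < b i)
    (h₀ : a₀ ≤ b₀) (hab : ∀ i, a i ≤ b i)
    (hyp : ∀ C : CakeInstance a₀ d a,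
      ∃ Q : Finset (Fin a₀), Q.card = m ∧ Placatable C Q) :
    ∀ C : CakeInstance b₀ d b,
      ∃ Q : Finset (Fin b₀), Q.card = m ∧ Placatable C Q := by
  intro C
  -- embed partition spaces by padding with zeros
  set ι : (∀ t, Fin (a t) → ℝ) → (∀ t, Fin (b t) → ℝ) :=
    fun P t k => if h : (k : ℕ) < a t then P t ⟨k, h⟩ else 0 with hι
  have hι_cont : Continuous ι := by
    apply continuous_pi; intro t; apply continuous_pi; intro k
    by_cases h : (k : ℕ) < a t
    · simp only [hι, dif_pos h]
      exact (continuous_apply _).comp (continuous_apply t)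
    · simp only [hι, dif_neg h]; exact continuous_const
  have hι_apply : ∀ (P : ∀ t, Fin (a t) → ℝ) (t : Fin d) (j : Fin (a t)),
      ι P t (Fin.castLE (hab t) j) = P t j := by
    intro P t j
    have h : ((Fin.castLE (hab t) j : Fin (b t)) : ℕ) < a t := j.isLt
    simp [hι, dif_pos h]
  have hsum : ∀ (P : ∀ t, Fin (a t) → ℝ) (t : Fin d),
      ∑ k : Fin (b t), ι P t k = ∑ j : Fin (a t), P t j := by
    intro P t
    rw [← Finset.sum_subset (Finset.subset_univ
      ((Finset.univ : Finset (Fin (a t))).map (Fin.castLEEmb (hab t))))]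
    · rw [Finset.sum_map]
      refine Finset.sum_congr rfl fun j _ => ?_
      exact hι_apply P t j
    · intro k _ hk
      have : ¬ ((k : ℕ) < a t) := by
        intro h
        apply hk
        simp only [Finset.mem_map, Finset.mem_univ, true_and]
        exact ⟨⟨k, h⟩, by ext; simp⟩
      simp [hι, this]
  have hι_mem : ∀ P ∈ PartitionSpace d a, ι P ∈ PartitionSpace d b := by
    intro P hP t
    constructor
    · intro k
      by_cases h : (k : ℕ) < a t
      · simp only [hι, dif_pos h]; exact (hP t).1 _
      · simp [hι, dif_neg h]
    · rw [hsum]; exact (hP t).2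
  -- the induced instance on `a₀` agents and small cakes
  set C' : CakeInstance a₀ d a :=
    { A := fun i j => ι ⁻¹' (C.A (Fin.castLE h₀ i) (fun t => Fin.castLE (hab t) (j t)))
        ∩ PartitionSpace d a
      subset_partitionSpace := fun i j => Set.inter_subset_right
      isClosed := fun i j => ((C.isClosed _ _).preimage hι_cont).inter <| by
        have : PartitionSpace d a =
            ⋂ t, (fun P : ∀ t, Fin (a t) → ℝ => P t) ⁻¹' stdSimplex ℝ (Fin (a t)) := by
          ext P; simp [PartitionSpace, Set.mem_iInter]
        rw [this]
        exact isClosed_iInter fun t =>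
          (isClosed_stdSimplex ℝ (Fin (a t))).preimage (continuous_apply t)
      hungry := by
        intro i P hP
        obtain ⟨j, hjmem, hjpos⟩ := C.hungry (Fin.castLE h₀ i) (ι P) (hι_mem P hP)
        have hlt : ∀ t, ((j t : ℕ)) < a t := by
          intro t
          by_contra h
          have := hjpos t
          simp [hι, dif_neg h] at this
        refine ⟨fun t => ⟨j t, hlt t⟩, ⟨?_, hP⟩, ?_⟩
        · have : (fun t => Fin.castLE (hab t) (⟨j t, hlt t⟩ : Fin (a t))) = j := by
            funext t; ext; simp
          simpa [this] using hjmem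
        · intro t
          have := hjpos t
          have h2 : ι P t (j t) = P t ⟨j t, hlt t⟩ := by simp [hι, dif_pos (hlt t)]
          rwa [h2] at this } with hC'
  obtain ⟨Q, hQcard, P, hPmem, φ, hφmem, hφdiff⟩ := hyp C'
  refine ⟨Q.map (Fin.castLEEmb h₀), by simp [hQcard], ι P, hι_mem P hPmem,
    fun i t => if h : (i : ℕ) < a₀ then Fin.castLE (hab t) (φ ⟨i, h⟩ t) else ⟨0, hb t⟩,
    ?_, ?_⟩
  · intro q hq
    obtain ⟨q₀, hq₀, rfl⟩ := Finset.mem_map.mp hq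
    have hlt : ((Fin.castLEEmb h₀ q₀ : Fin b₀) : ℕ) < a₀ := q₀.isLt
    have e : (⟨((Fin.castLEEmb h₀ q₀ : Fin b₀) : ℕ), hlt⟩ : Fin a₀) = q₀ := by ext; simp
    have : (fun t => if h : ((Fin.castLEEmb h₀ q₀ : Fin b₀) : ℕ) < a₀ then
        Fin.castLE (hab t) (φ ⟨(Fin.castLEEmb h₀ q₀ : Fin b₀), h⟩ t) else ⟨0, hb t⟩)
        = fun t => Fin.castLE (hab t) (φ q₀ t) := by
      funext t
      rw [dif_pos hlt, e]
    dsimp only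
    rw [this]
    exact (hφmem q₀ hq₀).1
  · intro q hq q' hq' hne t
    obtain ⟨q₀, hq₀, rfl⟩ := Finset.mem_map.mp hq
    obtain ⟨q₀', hq₀', rfl⟩ := Finset.mem_map.mp hq'
    have hne₀ : q₀ ≠ q₀' := fun h => hne (by rw [h])
    have h1 : ((Fin.castLEEmb h₀ q₀ : Fin b₀) : ℕ) < a₀ := q₀.isLt
    have h2 : ((Fin.castLEEmb h₀ q₀' : Fin b₀) : ℕ) < a₀ := q₀'.isLt
    dsimp only
    rw [dif_pos h1, dif_pos h2]
    intro heq
    have e1 : (⟨(Fin.castLEEmb h₀ q₀ : Fin b₀), h1⟩ : Fin a₀) = q₀ := by ext; simp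
    have e2 : (⟨(Fin.castLEEmb h₀ q₀' : Fin b₀), h2⟩ : Fin a₀) = q₀' := by ext; simp
    rw [e1, e2] at heq
    exact hφdiff q₀ hq₀ q₀' hq₀' hne₀ t (Fin.castLE_injective (hab t) heq)
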